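/- If G is an n×n real symmetric positive semidefinite matrix, then the matrix obtained by applying the exponential function entrywise, i.e. the matrix with entries exp(G_{ij}), is also symmetric positive semidefinite. -/

import Mathlib

open Matrix Nat

private lemma exp_tsum (y : ℝ) : Real.exp y = ∑' k : ℕ, y ^ k / k ! := by
  rw [Real.exp_eq_exp_ℝ, NormedSpace.exp_eq_tsum_div]

/-- Hadamard power quadratic form nonneg. -/
private lemma hadpow_nonneg {n : ℕ} {G : Matrix (Fin n) (Fin n) ℝ} (hG : G.PosSemidef)
    (x : Fin n → ℝ) (k : ℕ) :
    0 ≤ ∑ i, ∑ j, x i * x j * (G i j) ^ k := by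
  obtain ⟨B, hB⟩ : ∃ B : Matrix (Fin n) (Fin n) ℝ, G = Bᴴ * B := by
    open scoped MatrixOrder in
    exact CStarAlgebra.nonneg_iff_eq_star_mul_self.mp hG.nonneg
  have hGij : ∀ i j, G i j = ∑ t, B t i * B t j := by
    intro i j
    rw [hB]
    simp [Matrix.mul_apply, Matrix.conjTranspose_apply]
  set P := Fintype.piFinset (fun _ : Fin k => (Finset.univ : Finset (Fin n))) with hP
  have key : (∑ i, ∑ j, x i * x j * (G i j) ^ k)
      = ∑ y ∈ P, (∑ i, x i * ∏ l, B (y l) i) ^ 2 := by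
    have h1 : ∀ i j : Fin n, (G i j) ^ k
        = ∑ y ∈ P, (∏ l, B (y l) i) * (∏ l, B (y l) j) := by
      intro i j
      rw [hGij, ← Fin.prod_const k (∑ t, B t i * B t j), Finset.prod_univ_sum]
      exact Finset.sum_congr rfl fun y _ => by rw [← Finset.prod_mul_distrib]
    have swap : ∀ (f : Fin n → Fin n → (Fin k → Fin n) → ℝ),
        ∑ i, ∑ j, ∑ y ∈ P, f i j y = ∑ y ∈ P, ∑ i, ∑ j, f i j y := by
      intro f
      calc ∑ i, ∑ j, ∑ y ∈ P, f i j y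
          = ∑ i, ∑ y ∈ P, ∑ j, f i j y :=
            Finset.sum_congr rfl fun i _ => Finset.sum_comm
        _ = ∑ y ∈ P, ∑ i, ∑ j, f i j y := Finset.sum_comm
    simp_rw [h1, Finset.mul_sum]
    rw [swap]
    refine Finset.sum_congr rfl fun y _ => ?_
    rw [sq, Finset.sum_mul_sum]
    exact Finset.sum_congr rfl fun i _ => Finset.sum_congr rfl fun j _ => by ring
  rw [key]
  exact Finset.sum_nonneg fun y _ => sq_nonneg _

/-- If `G` is a real symmetric positive semidefinite matrix, then the
entrywise exponential of `G`, the matrix with entries `exp (G i j)`, is also symmetric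
positive semidefinite. -/
theorem entrywise_exp_posSemidef {n : ℕ}
    (G : Matrix (Fin n) (Fin n) ℝ) (hG : G.PosSemidef) :
    (Matrix.of fun i j => Real.exp (G i j))ᵀ = (Matrix.of fun i j => Real.exp (G i j)) ∧
      (Matrix.of fun i j => Real.exp (G i j)).PosSemidef := by
  have hsym : ∀ i j, G j i = G i j := by
    intro i j
    have := hG.1
    rw [Matrix.IsHermitian] at this
    conv_rhs => rw [← this]
    simp [Matrix.conjTranspose_apply]
  have hherm : (Matrix.of fun i j => Real.exp (G i j))ᵀ
      = (Matrix.of fun i j => Real.exp (G i j)) := by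
    ext i j
    simp [Matrix.transpose_apply, hsym]
  refine ⟨hherm, posSemidef_iff_dotProduct_mulVec.mpr ⟨?_, ?_⟩⟩
  · rw [Matrix.IsHermitian]
    ext i j
    simp [Matrix.conjTranspose_apply, hsym]
  · intro x
    have hquad : (star x) ⬝ᵥ ((Matrix.of fun i j => Real.exp (G i j)) *ᵥ x)
        = ∑ i, ∑ j, x i * x j * Real.exp (G i j) := by
      simp [dotProduct, Matrix.mulVec, Finset.mul_sum]
      exact Finset.sum_congr rfl fun i _ => Finset.sum_congr rfl fun j _ => by ring
    rw [hquad]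
    have hsummable : ∀ i j : Fin n, Summable (fun k : ℕ => x i * x j * ((G i j) ^ k / k !)) :=
      fun i j => (Real.summable_pow_div_factorial (G i j)).mul_left _
    have : (∑ i, ∑ j, x i * x j * Real.exp (G i j))
        = ∑' k : ℕ, ∑ i, ∑ j, x i * x j * ((G i j) ^ k / k !) := by
      simp_rw [exp_tsum, ← tsum_mul_left]
      rw [Summable.tsum_finsetSum (fun i _ => summable_sum fun j _ => hsummable i j)]
      exact Finset.sum_congr rfl fun i _ => by
        rw [Summable.tsum_finsetSum (fun j _ => hsummable i j)]
    rw [this]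
    refine tsum_nonneg fun k => ?_
    have : (∑ i, ∑ j, x i * x j * ((G i j) ^ k / k !))
        = (∑ i, ∑ j, x i * x j * (G i j) ^ k) / k ! := by
      rw [Finset.sum_div]
      exact Finset.sum_congr rfl fun i _ => by
        rw [Finset.sum_div]
        exact Finset.sum_congr rfl fun j _ => by ring
    rw [this]
    exact div_nonneg (hadpow_nonneg hG x k) (by positivity)
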